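/- One step of SGD on a strongly convex smooth function: let f : E → ℝ be μ-convex (μ ≥ 0), differentiable, and L-smooth with L > 0, and let x* be a minimizer of f. Let (Ω, P) be a probability space, x ∈ E a fixed point, and g : Ω → E a square-integrable random vector with ∫ g dP = ∇f(x) and ∫ ‖g(ξ) − ∇f(x)‖² dP(ξ) ≤ σ². Let H > L and define x⁺(ξ) := x − (1/H) g(ξ). Then ∫ [f(x⁺(ξ)) − f(x*)] dP(ξ) + (H/2) ∫ ‖x⁺(ξ) − x*‖² dP(ξ) ≤ ((H − μ)/2) ‖x − x*‖² + σ²/(2(H − L)). -/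

import Mathlib

open MeasureTheory RealInnerProductSpace

lemma descent_lemma
    {E : Type*} [NormedAddCommGroup E] [InnerProductSpace ℝ E] [CompleteSpace E]
    (f : E → ℝ) (hdiff : Differentiable ℝ f)
    (L : ℝ) (hL : 0 ≤ L)
    (hsmooth : ∀ x y : E, ‖gradient f x - gradient f y‖ ≤ L * ‖x - y‖)
    (x y : E) :
    f y ≤ f x + ⟪gradient f x, y - x⟫ + (L / 2) * ‖y - x‖ ^ 2 := by
  set v := y - x with hv
  set φ' : ℝ → ℝ := fun t => ⟪gradient f (x + t • v), v⟫ with hφ'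
  have hderiv : ∀ t : ℝ, HasDerivAt (fun t : ℝ => f (x + t • v)) (φ' t) t := by
    intro t
    have h1 : HasDerivAt (fun t : ℝ => x + t • v) v t := by
      simpa using ((hasDerivAt_id t).smul_const v).const_add x
    have h2 := ((hdiff (x + t • v)).hasGradientAt).hasFDerivAt
    have := h2.comp_hasDerivAt t h1
    simpa [hφ', Function.comp_def] using this
  have hgradcont : Continuous (gradient f) := by
    have : LipschitzWith (Real.toNNReal L) (gradient f) := by
      apply LipschitzWith.of_dist_le_mul
      intro a b
      simp only [dist_eq_norm]
      calc ‖gradient f a - gradient f b‖ ≤ L * ‖a - b‖ := hsmooth a b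
        _ ≤ Real.toNNReal L * ‖a - b‖ := by
            gcongr; exact (Real.coe_toNNReal L hL).symm.le
    exact this.continuous
  have hcont : Continuous φ' := by
    apply Continuous.inner
    · exact hgradcont.comp (by continuity)
    · exact continuous_const
  have hftc : f y - f x = ∫ t in (0:ℝ)..1, φ' t := by
    have := intervalIntegral.integral_eq_sub_of_hasDerivAt
      (fun t _ => hderiv t) (hcont.intervalIntegrable 0 1)
    rw [this]; simp [hv]
  have hbound : ∫ t in (0:ℝ)..1, φ' t ≤ ∫ t in (0:ℝ)..1, (⟪gradient f x, v⟫ + L * t * ‖v‖ ^ 2) := by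
    apply intervalIntegral.integral_mono_on (by norm_num)
      (hcont.intervalIntegrable 0 1)
      (by apply Continuous.intervalIntegrable; continuity)
    intro t ht
    have ht0 : 0 ≤ t := ht.1
    have : φ' t - ⟪gradient f x, v⟫ = ⟪gradient f (x + t • v) - gradient f x, v⟫ := by
      rw [inner_sub_left]
    have hle : φ' t - ⟪gradient f x, v⟫ ≤ L * t * ‖v‖ ^ 2 := by
      rw [this]
      calc ⟪gradient f (x + t • v) - gradient f x, v⟫
          ≤ ‖gradient f (x + t • v) - gradient f x‖ * ‖v‖ := real_inner_le_norm _ _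
        _ ≤ (L * ‖x + t • v - x‖) * ‖v‖ := by gcongr; exact hsmooth _ _
        _ = L * t * ‖v‖ ^ 2 := by
            simp [norm_smul, abs_of_nonneg ht0]; ring
    linarith
  have hint : ∫ t in (0:ℝ)..1, (⟪gradient f x, v⟫ + L * t * ‖v‖ ^ 2)
      = ⟪gradient f x, v⟫ + (L / 2) * ‖v‖ ^ 2 := by
    rw [intervalIntegral.integral_add (by apply Continuous.intervalIntegrable; continuity)
      (by apply Continuous.intervalIntegrable; continuity)]
    rw [show (fun t : ℝ => L * t * ‖v‖^2) = fun t : ℝ => (L * ‖v‖^2) * t by ext t; ring]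
    rw [intervalIntegral.integral_const_mul]
    simp
    ring
  nlinarith [hftc, hbound, hint]

/-- One step of SGD on a strongly convex smooth function
(one-step version of Lemma `thm:SGD-ConvexSmooth`). -/
theorem sgd_one_step
    {E : Type*} [NormedAddCommGroup E] [InnerProductSpace ℝ E] [CompleteSpace E]
    (f : E → ℝ) (hdiff : Differentiable ℝ f)
    (μ : ℝ) (hμ : 0 ≤ μ)
    (hconv : ∀ x y : E,
      f y ≥ f x + ⟪gradient f x, y - x⟫ + (μ / 2) * ‖x - y‖ ^ 2)
    (L : ℝ) (hL : 0 < L)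
    (hsmooth : ∀ x y : E, ‖gradient f x - gradient f y‖ ≤ L * ‖x - y‖)
    (xstar : E) (hstar : ∀ y, f xstar ≤ f y)
    {Ω : Type*} [MeasurableSpace Ω] (P : Measure Ω) [IsProbabilityMeasure P]
    (x : E) (g : Ω → E) (hg : MemLp g 2 P)
    (hmean : ∫ ω, g ω ∂P = gradient f x)
    (σ : ℝ) (hvar : ∫ ω, ‖g ω - gradient f x‖ ^ 2 ∂P ≤ σ ^ 2)
    (H : ℝ) (hH : L < H) :
    (∫ ω, (f (x - (1 / H) • g ω) - f xstar) ∂P)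
        + (H / 2) * ∫ ω, ‖x - (1 / H) • g ω - xstar‖ ^ 2 ∂P
      ≤ ((H - μ) / 2) * ‖x - xstar‖ ^ 2 + σ ^ 2 / (2 * (H - L)) := by
  have hH0 : (0:ℝ) < H := hL.trans hH
  set G := gradient f x with hG
  set Δ := x - xstar with hΔ
  set c : ℝ := (L + H) / (2 * H ^ 2) with hc
  set F : Ω → ℝ := fun ω => f (x - (1 / H) • g ω) - f xstar with hF
  set Q : Ω → ℝ := fun ω => ‖x - (1 / H) • g ω - xstar‖ ^ 2 with hQ
  set R : Ω → ℝ := fun ω =>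
    f x - f xstar + (H / 2) * ‖Δ‖ ^ 2 - ⟪g ω, Δ⟫ - (1 / H) * ⟪G, g ω⟫ + c * ‖g ω‖ ^ 2 with hR
  have hHne : H ≠ 0 := ne_of_gt hH0
  clear_value G Δ c F Q R
  -- pointwise inequality
  have hpt : ∀ ω, F ω + (H / 2) * Q ω ≤ R ω := by
    intro ω
    have hd := descent_lemma f hdiff L hL.le hsmooth x (x - (1 / H) • g ω)
    rw [← hG] at hd
    have e1 : x - (1 / H) • g ω - x = -((1 / H) • g ω) := by abel
    rw [e1] at hd
    have e2 : ⟪G, -((1/H) • g ω)⟫ = -((1/H) * ⟪G, g ω⟫) := by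
      rw [inner_neg_right, real_inner_smul_right]
    have e3 : ‖-((1/H) • g ω)‖ ^ 2 = (1/H)^2 * ‖g ω‖^2 := by
      rw [norm_neg, norm_smul]
      simp [abs_of_pos hH0]
      ring
    rw [e2, e3] at hd
    have hd' : f (x - (1 / H) • g ω) ≤ f x - (1/H) * ⟪G, g ω⟫
        + (L / (2 * H^2)) * ‖g ω‖^2 := by
      have : L / 2 * ((1 / H) ^ 2 * ‖g ω‖ ^ 2) = (L / (2 * H^2)) * ‖g ω‖^2 := by
        field_simp
      linarith [hd, this.le, this.ge]
    have eQ : (H/2) * Q ω = (H/2) * ‖Δ‖^2 - ⟪Δ, g ω⟫ + (1/(2*H)) * ‖g ω‖^2 := by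
      have e4 : x - (1 / H) • g ω - xstar = Δ - (1/H) • g ω := by rw [hΔ]; abel
      rw [hQ]
      simp only [e4, norm_sub_sq_real, real_inner_smul_right, norm_smul]
      rw [Real.norm_eq_abs, abs_of_pos (by positivity : (0:ℝ) < 1/H)]
      field_simp
    have ecomm : ⟪g ω, Δ⟫ = ⟪Δ, g ω⟫ := real_inner_comm _ _
    have ecoef : c * ‖g ω‖^2 = (L / (2 * H^2)) * ‖g ω‖^2 + (1/(2*H)) * ‖g ω‖^2 := by
      rw [hc]; field_simp
    rw [hR, hF]
    simp only [ecomm]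
    linarith [hd', eQ, ecoef]
  -- integrability
  have hgi : Integrable g P := hg.integrable one_le_two
  have hgsq : Integrable (fun ω => ‖g ω‖ ^ 2) P := hg.norm.integrable_sq
  have h1 : Integrable (fun ω => ⟪g ω, Δ⟫) P := hgi.inner_const Δ
  have h2 : Integrable (fun ω => ⟪G, g ω⟫) P := hgi.const_inner G
  have iR1 : Integrable (fun ω => f x - f xstar + (H/2)*‖Δ‖^2 - ⟪g ω, Δ⟫) P :=
    (integrable_const _).sub h1
  have iR2 : Integrable
      (fun ω => f x - f xstar + (H/2)*‖Δ‖^2 - ⟪g ω, Δ⟫ - (1/H)*⟪G, g ω⟫) P :=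
    iR1.sub (h2.const_mul _)
  have hRint : Integrable R P := by
    rw [hR]; exact iR2.add (hgsq.const_mul c)
  have hQm : MemLp (fun ω => x - (1 / H) • g ω - xstar) 2 P :=
    ((memLp_const x).sub (hg.const_smul (1/H))).sub (memLp_const xstar)
  have hQint : Integrable Q P := by
    rw [hQ]; exact hQm.norm.integrable_sq
  have hFaesm : AEStronglyMeasurable F P := by
    rw [hF]
    have hx : AEStronglyMeasurable (fun ω => x - (1 / H) • g ω) P :=
      aestronglyMeasurable_const.sub (hg.1.const_smul (1/H))
    exact (hdiff.continuous.comp_aestronglyMeasurable hx).sub aestronglyMeasurable_const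
  have hF0 : ∀ ω, 0 ≤ F ω := by
    intro ω; rw [hF]; exact sub_nonneg.2 (hstar _)
  have hFR : ∀ ω, F ω ≤ R ω := by
    intro ω
    have hQ0' : 0 ≤ Q ω := by simp only [hQ]; positivity
    have hQ0 : 0 ≤ (H/2) * Q ω := mul_nonneg (by linarith) hQ0'
    linarith [hpt ω]
  have hFint : Integrable F P :=
    hRint.mono' hFaesm (Filter.Eventually.of_forall fun ω => by
      rw [Real.norm_eq_abs, abs_of_nonneg (hF0 ω)]; exact hFR ω)
  -- integral inequality
  have hmono : ∫ ω, (F ω + (H/2) * Q ω) ∂P ≤ ∫ ω, R ω ∂P :=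
    integral_mono (hFint.add (hQint.const_mul _)) hRint hpt
  have hsplit : ∫ ω, (F ω + (H/2) * Q ω) ∂P
      = (∫ ω, F ω ∂P) + (H/2) * ∫ ω, Q ω ∂P := by
    rw [integral_add hFint (hQint.const_mul _), integral_const_mul]
  -- compute ∫ R
  have hint1 : ∫ ω, ⟪g ω, Δ⟫ ∂P = ⟪G, Δ⟫ := by
    have h := integral_inner (𝕜 := ℝ) hgi Δ
    rw [hmean] at h
    have e : ∫ ω, ⟪g ω, Δ⟫ ∂P = ∫ ω, ⟪Δ, g ω⟫ ∂P :=
      integral_congr_ae (Filter.Eventually.of_forall fun ω => real_inner_comm _ _)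
    rw [e, h]; exact real_inner_comm _ _
  have hint2 : ∫ ω, ⟪G, g ω⟫ ∂P = ‖G‖ ^ 2 := by
    rw [integral_inner hgi, hmean, real_inner_self_eq_norm_sq]
  have hdint : Integrable (fun ω => ‖g ω - G‖ ^ 2) P :=
    (hg.sub (memLp_const G)).norm.integrable_sq
  have hsqid : ∀ ω, ‖g ω‖ ^ 2 = ‖g ω - G‖ ^ 2 + 2 * ⟪G, g ω⟫ - ‖G‖ ^ 2 := by
    intro ω
    have h := norm_sub_sq_real (g ω) G
    have hcm : ⟪g ω, G⟫ = ⟪G, g ω⟫ := real_inner_comm _ _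
    rw [hcm] at h
    linarith
  set S := ∫ ω, ‖g ω - G‖ ^ 2 ∂P with hS
  clear_value S
  have hint3 : ∫ ω, ‖g ω‖ ^ 2 ∂P = S + ‖G‖ ^ 2 := by
    have iA : Integrable (fun ω => ‖g ω - G‖ ^ 2 + 2 * ⟪G, g ω⟫) P :=
      hdint.add (h2.const_mul 2)
    simp_rw [hsqid]
    rw [integral_sub iA (integrable_const _),
      integral_add hdint (h2.const_mul 2), integral_const_mul, hint2, integral_const]
    simp [measure_univ]
    rw [← hS]; ring
  have hRval : ∫ ω, R ω ∂P = f x - f xstar + (H/2)*‖Δ‖^2 - ⟪G, Δ⟫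
      - (1/H)*‖G‖^2 + c*(S + ‖G‖^2) := by
    rw [hR]
    rw [integral_add iR2 (hgsq.const_mul c),
      integral_sub iR1 (h2.const_mul (1/H)),
      integral_sub (integrable_const _) h1,
      integral_const, integral_const_mul, integral_const_mul, hint1, hint2, hint3]
    simp [measure_univ]
  -- convexity at x, xstar
  have hconvx : f x - f xstar ≤ ⟪G, Δ⟫ - (μ/2)*‖Δ‖^2 := by
    have h := hconv x xstar
    rw [← hG] at h
    have e : ⟪G, xstar - x⟫ = -⟪G, Δ⟫ := by
      rw [hΔ, show xstar - x = -(x - xstar) by abel, inner_neg_right]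
    rw [e, ← hΔ] at h
    linarith
  -- scalar estimates
  have hS0 : 0 ≤ S := by rw [hS]; exact integral_nonneg fun ω => sq_nonneg _
  have hσ0 : 0 ≤ σ^2 := le_trans hS0 hvar
  have hc0 : 0 ≤ c := by rw [hc]; exact div_nonneg (by linarith) (by positivity)
  have hcle : c ≤ 1 / (2*(H-L)) := by
    rw [hc, div_le_div_iff₀ (by positivity) (by linarith)]
    nlinarith
  have hcS : c * S ≤ σ^2 / (2*(H-L)) := by
    calc c * S ≤ c * σ^2 := mul_le_mul_of_nonneg_left hvar hc0
      _ ≤ (1/(2*(H-L))) * σ^2 := mul_le_mul_of_nonneg_right hcle hσ0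
      _ = σ^2 / (2*(H-L)) := by ring
  have hG2 : (c - 1/H) * ‖G‖^2 ≤ 0 := by
    have hcH : c - 1/H ≤ 0 := by
      have e : c - 1/H = (L - H)/(2*H^2) := by rw [hc]; field_simp; ring
      have h' : 0 ≤ (H - L)/(2*H^2) := div_nonneg (by linarith) (by positivity)
      have e2 : (L - H)/(2*H^2) = -((H - L)/(2*H^2)) := by ring
      rw [e, e2]
      linarith
    calc (c - 1/H) * ‖G‖^2 ≤ 0 * ‖G‖^2 := mul_le_mul_of_nonneg_right hcH (sq_nonneg _)
      _ = 0 := by ring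
  have hexp : c*(S + ‖G‖^2) = c*S + (c - 1/H)*‖G‖^2 + (1/H)*‖G‖^2 := by ring
  linarith [hmono, hsplit, hRval, hconvx, hcS, hG2, hexp]
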